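/- Let K be a perfect metrizable Baire space. Then the sequential monotone closure of CD_ω(K) in B(K) equals {f ∈ B(K) : ∃ g ∈ DBSC(K) with {x : f(x)≠g(x)} at most countable}. -/

import Mathlib

open Filter

/-- f is a bounded real function (member of B(K)). -/
def Bdd {K : Type*} (f : K → ℝ) : Prop := ∃ C : ℝ, ∀ x, |f x| ≤ C

/-- The space CD_ω(K). -/
def CDomega (K : Type*) [TopologicalSpace K] : Set (K → ℝ) :=
  {f | Bdd f ∧ ∃ g : K → ℝ, Continuous g ∧ Bdd g ∧ {x | f x ≠ g x}.Countable}

/-- f is the pointwise limit of an increasing sequence from E, within B(K). -/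
def UpLim {K : Type*} (E : Set (K → ℝ)) (f : K → ℝ) : Prop :=
  Bdd f ∧ ∃ u : ℕ → K → ℝ, (∀ n, u n ∈ E) ∧ Monotone u ∧
    ∀ x, Tendsto (fun n => u n x) atTop (nhds (f x))

/-- g is a difference of bounded semicontinuous functions. -/
def DBSC {K : Type*} [TopologicalSpace K] (g : K → ℝ) : Prop :=
  ∃ h k : K → ℝ, Bdd h ∧ Bdd k ∧ LowerSemicontinuous h ∧ LowerSemicontinuous k ∧
    g = h - k

section Aux

open NNReal

/-- Moreau–Yosida approximation: a bounded lower semicontinuous function on a pseudometric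
space is the pointwise limit of an increasing sequence of (uniformly bounded) continuous
functions. -/
private lemma moreau {X : Type*} [PseudoMetricSpace X] [Nonempty X] {h : X → ℝ} {C : ℝ}
    (hb : ∀ x, |h x| ≤ C) (hl : LowerSemicontinuous h) :
    ∃ u : ℕ → X → ℝ, (∀ n, Continuous (u n)) ∧ Monotone u ∧
      (∀ n x, |u n x| ≤ C) ∧ ∀ x, Tendsto (fun n => u n x) atTop (nhds (h x)) := by
  set u : ℕ → X → ℝ := fun n x => ⨅ y, (h y + n * dist x y) with hu
  have hbdd : ∀ (n : ℕ) (x : X), BddBelow (Set.range fun y => h y + n * dist x y) := by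
    intro n x
    refine ⟨-C, ?_⟩
    rintro _ ⟨y, rfl⟩
    have h1 := (abs_le.1 (hb y)).1
    have h2 : (0:ℝ) ≤ n * dist x y := by positivity
    simp only []
    linarith
  have hle : ∀ n x, u n x ≤ h x := by
    intro n x
    have := ciInf_le (hbdd n x) x
    simpa using this
  have hge : ∀ n x, -C ≤ u n x := by
    intro n x
    refine le_ciInf fun y => ?_
    have h2 : (0:ℝ) ≤ n * dist x y := by positivity
    linarith [(abs_le.1 (hb y)).1]
  have habs : ∀ n x, |u n x| ≤ C := fun n x =>
    abs_le.2 ⟨hge n x, (hle n x).trans (abs_le.1 (hb x)).2⟩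
  have hmono : Monotone u := by
    intro m n hmn x
    refine le_ciInf fun y => ?_
    refine (ciInf_le (hbdd m x) y).trans ?_
    have : (m:ℝ) * dist x y ≤ (n:ℝ) * dist x y :=
      mul_le_mul_of_nonneg_right (by exact_mod_cast hmn) dist_nonneg
    linarith
  have hlip : ∀ (n : ℕ) (x x' : X), u n x ≤ u n x' + n * dist x x' := by
    intro n x x'
    have : u n x - n * dist x x' ≤ u n x' := by
      refine le_ciInf fun y => ?_
      have h1 := ciInf_le (hbdd n x) y
      have h2 : dist x y ≤ dist x x' + dist x' y := dist_triangle x x' y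
      have h3 : (n:ℝ) * dist x y ≤ n * (dist x x' + dist x' y) :=
        mul_le_mul_of_nonneg_left h2 (by positivity)
      have h4 : u n x ≤ h y + n * dist x y := h1
      nlinarith
    linarith
  refine ⟨u, ?_, hmono, habs, ?_⟩
  · intro n
    have : LipschitzWith (n : ℝ≥0) (u n) := by
      refine LipschitzWith.of_dist_le_mul fun x x' => ?_
      rw [Real.dist_eq, abs_le]
      constructor
      · have := hlip n x' x
        rw [dist_comm x' x] at this
        push_cast
        linarith
      · have := hlip n x x'
        push_cast
        linarith
    exact this.continuous
  · intro x
    rw [Metric.tendsto_atTop]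
    intro ε hε
    have hlt : h x - ε / 2 < h x := by linarith
    have := hl x _ hlt
    rw [Metric.eventually_nhds_iff] at this
    obtain ⟨δ, hδ, hδ'⟩ := this
    obtain ⟨N, hN⟩ := exists_nat_ge ((h x + C) / δ)
    refine ⟨N, fun n hn => ?_⟩
    have key : h x - ε / 2 ≤ u n x := by
      refine le_ciInf fun y => ?_
      by_cases hy : dist y x < δ
      · have h2 : (0:ℝ) ≤ (n:ℝ) * dist x y := by positivity
        linarith [hδ' hy]
      · push_neg at hy
        rw [dist_comm] at hy
        have h1 : (h x + C) ≤ N * δ := by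
          rw [div_le_iff₀ hδ] at hN
          linarith
        have h2 : (N:ℝ) * δ ≤ n * δ := by
          have : (N:ℝ) ≤ n := by exact_mod_cast hn
          nlinarith
        have h3 : (n:ℝ) * δ ≤ n * dist x y :=
          mul_le_mul_of_nonneg_left hy (by positivity)
        linarith [(abs_le.1 (hb y)).1]
    have hle' := hle n x
    rw [Real.dist_eq, abs_sub_comm, abs_of_nonneg (by linarith)]
    linarith

private def maxUpTo {K : Type*} (g : ℕ → K → ℝ) : ℕ → K → ℝ
  | 0 => g 0
  | n+1 => fun x => max (maxUpTo g n x) (g (n+1) x)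

private lemma maxUpTo_continuous {K : Type*} [TopologicalSpace K] {g : ℕ → K → ℝ}
    (hg : ∀ n, Continuous (g n)) : ∀ n, Continuous (maxUpTo g n) := by
  intro n
  induction n with
  | zero => exact hg 0
  | succ m ih => exact ih.max (hg (m+1))

private lemma maxUpTo_agree {K : Type*} {g s : ℕ → K → ℝ} {x : K}
    (hagree : ∀ n, s n x = g n x) (hmono : Monotone fun n => s n x) :
    ∀ n, maxUpTo g n x = s n x := by
  intro n
  induction n with
  | zero => exact (hagree 0).symm
  | succ m ih =>
    show max (maxUpTo g m x) (g (m+1) x) = s (m+1) x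
    rw [ih, ← hagree (m+1)]
    exact max_eq_right (hmono (Nat.le_succ m))

private lemma maxUpTo_ge {K : Type*} (g : ℕ → K → ℝ) (x : K) :
    ∀ n, g 0 x ≤ maxUpTo g n x := by
  intro n
  induction n with
  | zero => exact le_refl _
  | succ m ih => exact ih.trans (le_max_left _ _)

/-- A function which is an increasing pointwise limit of a sequence from CD_ω(K) agrees with
a bounded lower semicontinuous function off a countable set. -/
private lemma forward_half {K : Type*} [TopologicalSpace K] {u : K → ℝ}
    (hU : UpLim (CDomega K) u) :
    ∃ h' : K → ℝ, Bdd h' ∧ LowerSemicontinuous h' ∧ {x | u x ≠ h' x}.Countable := by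
  obtain ⟨⟨Cu, hCu⟩, s, hE, hmono, htend⟩ := hU
  choose g hgc hgB hgN using fun n => (hE n).2
  obtain ⟨C0, hC0⟩ := hgB 0
  set Gm : ℕ → K → ℝ := fun n x => min (maxUpTo g n x) Cu with hGm
  have hGmC : ∀ n, Continuous (Gm n) :=
    fun n => ((maxUpTo_continuous hgc) n).min continuous_const
  set B : ℝ := max C0 |Cu| with hB
  have hGmub : ∀ n x, Gm n x ≤ B := fun n x =>
    (min_le_right _ _).trans ((le_abs_self Cu).trans (le_max_right _ _))
  have hGmlb : ∀ n x, -B ≤ Gm n x := by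
    intro n x
    have h1 : -C0 ≤ g 0 x := (abs_le.1 (hC0 x)).1
    have h2 : g 0 x ≤ maxUpTo g n x := maxUpTo_ge g x n
    have h3 : -|Cu| ≤ Cu := neg_abs_le Cu
    refine le_min (by linarith [le_max_left C0 |Cu|]) (by linarith [le_max_right C0 |Cu|])
  have hbddA : ∀ x, BddAbove (Set.range fun n => Gm n x) := fun x =>
    ⟨B, by rintro _ ⟨n, rfl⟩; exact hGmub n x⟩
  refine ⟨fun x => ⨆ n, Gm n x, ⟨B, fun x => abs_le.2 ⟨?_, ciSup_le fun n => hGmub n x⟩⟩,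
    ?_, ?_⟩
  · exact (hGmlb 0 x).trans (le_ciSup (hbddA x) 0)
  · -- lower semicontinuity of the supremum
    intro x t ht
    obtain ⟨n, hn⟩ := (lt_ciSup_iff (hbddA x)).1 ht
    filter_upwards [(hGmC n).continuousAt.eventually (eventually_gt_nhds hn)] with z hz
    exact hz.trans_le (le_ciSup (hbddA z) n)
  · -- countability of the disagreement set
    refine Set.Countable.mono ?_ (Set.countable_iUnion hgN)
    intro x hx
    simp only [Set.mem_setOf_eq] at hx
    by_contra hxN
    simp only [Set.mem_iUnion, Set.mem_setOf_eq, not_exists] at hxN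
    push_neg at hxN
    have hsm : Monotone fun n => s n x := fun a b hab => hmono hab x
    have heq : ∀ n, maxUpTo g n x = s n x := maxUpTo_agree hxN hsm
    have hsu : ∀ n, s n x ≤ u x := hsm.ge_of_tendsto (htend x)
    have huC : u x ≤ Cu := (abs_le.1 (hCu x)).2
    have hGms : ∀ n, Gm n x = s n x := by
      intro n
      rw [hGm]
      simp only []
      rw [heq n]
      exact min_eq_left ((hsu n).trans huC)
    apply hx
    have h1 : Tendsto (fun n => Gm n x) atTop (nhds (⨆ n, Gm n x)) :=
      tendsto_atTop_ciSup (fun a b hab => by rw [hGms a, hGms b]; exact hsm hab) (hbddA x)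
    have h2 : Tendsto (fun n => Gm n x) atTop (nhds (u x)) := by
      simp only [hGms]
      exact htend x
    exact tendsto_nhds_unique h2 h1

/-- A bounded lower semicontinuous function plus a bounded function supported on a countable
set is an increasing limit of a sequence from CD_ω(K). -/
private lemma backward_half {K : Type*} [TopologicalSpace K]
    [TopologicalSpace.MetrizableSpace K] [Nonempty K] {h d : K → ℝ} {Ch Cd : ℝ}
    (hCh : ∀ x, |h x| ≤ Ch) (hlsc : LowerSemicontinuous h)
    (hCd : ∀ x, |d x| ≤ Cd) (hdN : {x | d x ≠ 0}.Countable) :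
    UpLim (CDomega K) (fun x => h x + d x) := by
  letI : PseudoMetricSpace K := TopologicalSpace.pseudoMetrizableSpacePseudoMetric K
  obtain ⟨u, huC, huM, huB, huT⟩ := moreau hCh hlsc
  refine ⟨⟨Ch + Cd, fun x => (abs_add_le _ _).trans (add_le_add (hCh x) (hCd x))⟩,
    fun n x => u n x + d x, fun n => ?_, fun a b hab x => add_le_add_left (huM hab x) _,
    fun x => (huT x).add_const (d x)⟩
  refine ⟨⟨Ch + Cd, fun x => (abs_add_le _ _).trans (add_le_add (huB n x) (hCd x))⟩,
    u n, huC n, ⟨Ch, huB n⟩, Set.Countable.mono ?_ hdN⟩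
  intro x hx
  simp only [Set.mem_setOf_eq] at hx ⊢
  intro hdx
  exact hx (by rw [hdx, add_zero])

end Aux

/-- Let K be a perfect metrizable Baire space. Then the sequential
monotone closure of CD_ω(K) in B(K), i.e. u(CD_ω(K)) − u(CD_ω(K)), equals
{f ∈ B(K) : ∃ g ∈ DBSC(K), [f ≠ g] at most countable}. -/
theorem stmt10 {K : Type*} [TopologicalSpace K] [TopologicalSpace.MetrizableSpace K]
    [BaireSpace K] (hperfect : ∀ x : K, ¬ IsOpen ({x} : Set K)) :
    {f : K → ℝ | Bdd f ∧ ∃ u v : K → ℝ, UpLim (CDomega K) u ∧ UpLim (CDomega K) v ∧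
        f = u - v} =
      {f : K → ℝ | Bdd f ∧ ∃ g : K → ℝ, DBSC g ∧ {x | f x ≠ g x}.Countable} := by
  ext f
  simp only [Set.mem_setOf_eq]
  constructor
  · rintro ⟨hBf, u, v, hUu, hUv, rfl⟩
    obtain ⟨h', hBh, hlsc, hNu⟩ := forward_half hUu
    obtain ⟨k', hBk, klsc, hNv⟩ := forward_half hUv
    refine ⟨hBf, h' - k', ⟨h', k', hBh, hBk, hlsc, klsc, rfl⟩, ?_⟩
    refine Set.Countable.mono ?_ (hNu.union hNv)
    intro x hx
    simp only [Set.mem_setOf_eq, Pi.sub_apply] at hx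
    by_contra hmem
    simp only [Set.mem_union, Set.mem_setOf_eq] at hmem
    push_neg at hmem
    exact hx (by rw [hmem.1, hmem.2])
  · rintro ⟨hBf, g, ⟨h, k, ⟨Ch, hCh⟩, ⟨Ck, hCk⟩, hlsc, klsc, rfl⟩, hcount⟩
    refine ⟨hBf, ?_⟩
    rcases isEmpty_or_nonempty K with hK | hK
    · -- trivial case: K is empty
      have hz : UpLim (CDomega K) (fun _ => (0:ℝ)) := by
        refine ⟨⟨0, fun x => (IsEmpty.false x).elim⟩, fun _ _ => 0, fun n => ?_,
          fun a b _ x => le_refl _, fun x => (IsEmpty.false x).elim⟩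
        exact ⟨⟨0, fun x => (IsEmpty.false x).elim⟩, fun _ => 0, continuous_const,
          ⟨0, fun x => (IsEmpty.false x).elim⟩,
          Set.Countable.mono (fun x _ => (IsEmpty.false x).elim) Set.countable_empty⟩
      exact ⟨fun _ => 0, fun _ => 0, hz, hz,
        funext fun x => (IsEmpty.false x).elim⟩
    · obtain ⟨Cf, hCf⟩ := hBf
      set dp : K → ℝ := fun x => max (f x - (h x - k x)) 0 with hdp
      set dm : K → ℝ := fun x => max ((h x - k x) - f x) 0 with hdm
      have hdiff : ∀ x, f x ≠ (h - k) x ↔ f x ≠ h x - k x := by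
        intro x; rw [Pi.sub_apply]
      have hdpb : ∀ x, |dp x| ≤ Cf + Ch + Ck := by
        intro x
        have h1 := abs_le.1 (hCf x)
        have h2 := abs_le.1 (hCh x)
        have h3 := abs_le.1 (hCk x)
        rw [hdp]
        simp only []
        rw [abs_le]
        constructor
        · have : (0:ℝ) ≤ max (f x - (h x - k x)) 0 := le_max_right _ _
          linarith
        · exact max_le (by linarith) (by linarith)
      have hdmb : ∀ x, |dm x| ≤ Cf + Ch + Ck := by
        intro x
        have h1 := abs_le.1 (hCf x)
        have h2 := abs_le.1 (hCh x)
        have h3 := abs_le.1 (hCk x)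
        rw [hdm]
        simp only []
        rw [abs_le]
        constructor
        · have : (0:ℝ) ≤ max ((h x - k x) - f x) 0 := le_max_right _ _
          linarith
        · exact max_le (by linarith) (by linarith)
      have hdpN : {x | dp x ≠ 0}.Countable := by
        refine Set.Countable.mono ?_ hcount
        intro x hx
        simp only [Set.mem_setOf_eq, hdp] at hx ⊢
        rw [Pi.sub_apply]
        intro hfx
        exact hx (by rw [hfx]; simp)
      have hdmN : {x | dm x ≠ 0}.Countable := by
        refine Set.Countable.mono ?_ hcount
        intro x hx
        simp only [Set.mem_setOf_eq, hdm] at hx ⊢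
        rw [Pi.sub_apply]
        intro hfx
        exact hx (by rw [hfx]; simp)
      refine ⟨fun x => h x + dp x, fun x => k x + dm x,
        backward_half hCh hlsc hdpb hdpN, backward_half hCk klsc hdmb hdmN, ?_⟩
      funext x
      rw [Pi.sub_apply]
      rcases le_total (f x - (h x - k x)) 0 with hc | hc
      · rw [hdp, hdm]
        simp only []
        rw [max_eq_right hc, max_eq_left (by linarith)]
        ring
      · rw [hdp, hdm]
        simp only []
        rw [max_eq_left hc, max_eq_right (by linarith)]
        ring
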